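/- Let f(x) = ⟨v, x⟩ for a unit vector v ∈ ℝ^n, and let x be drawn from an ε-biased distribution over {−1,1}^n. Then for every even integer p ≥ 2: E[f(x)^p] ≤ (p−1)·(p−3)⋯1 + ‖v‖_0^p · ε, where (p−1)(p−3)⋯1 = p!/(2^{p/2}(p/2)!) is the p-th Gaussian moment. -/

import Mathlib

open Finset

/-- The map sending a boolean to the corresponding sign `±1`. -/
noncomputable def pm (b : Bool) : ℝ := if b then 1 else -1

lemma pm_sq (b : Bool) : pm b ^ 2 = 1 := by cases b <;> norm_num [pm]

lemma pm_pow (b : Bool) (m : ℕ) : pm b ^ m = if Even m then 1 else pm b := by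
  rcases Nat.even_or_odd m with ⟨t, ht⟩ | ⟨t, ht⟩
  · simp only [ht, if_pos (by exact ⟨t, rfl⟩ : Even (t + t))]
    rw [← two_mul, pow_mul, pm_sq, one_pow]
  · rw [ht, if_neg (by simp [Nat.even_add_one, Nat.even_mul])]
    rw [pow_add, pow_mul, pm_sq, one_pow, pow_one, one_mul]

lemma two_pow_fact_le (m : ℕ) : 2 ^ m * m.factorial ≤ (2 * m).factorial := by
  induction m with
  | zero => simp
  | succ m ih =>
    have h1 : 2 * (m + 1) = 2 * m + 1 + 1 := by ring
    rw [h1, Nat.factorial_succ, Nat.factorial_succ, Nat.factorial_succ]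
    calc 2 ^ (m+1) * ((m+1) * m.factorial) = (2 * (m+1)) * (2 ^ m * m.factorial) := by ring
    _ ≤ (2 * m + 1 + 1) * (2 * m).factorial := by
        exact Nat.mul_le_mul (by omega) ih
    _ ≤ (2 * m + 1 + 1) * ((2 * m + 1) * (2 * m).factorial) :=
        Nat.mul_le_mul_left _ (Nat.le_mul_of_pos_left _ (by omega))

/-- `D m` is the `2m`-th Gaussian moment `(2m-1)!!`. -/
noncomputable def D (m : ℕ) : ℝ := ((2 * m).factorial : ℝ) / (2 ^ m * m.factorial)

lemma D_pos (m : ℕ) : 0 < D m := by unfold D; positivity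

lemma one_le_D (m : ℕ) : 1 ≤ D m := by
  rw [D, le_div_iff₀ (by positivity), one_mul]
  exact_mod_cast two_pow_fact_le m

lemma choose_D_le {l q : ℕ} (h : l ≤ q) :
    ((2 * q).choose (2 * l) : ℝ) * D l ≤ D q * (q.choose l : ℝ) := by
  have h2 : 2 * l ≤ 2 * q := by omega
  rw [Nat.cast_choose ℝ h2, Nat.cast_choose ℝ h, D, D, div_mul_div_comm, div_mul_div_comm]
  rw [div_le_div_iff₀ (by positivity) (by positivity)]
  have key : (2 : ℝ) ^ (q - l) * (q - l).factorial ≤ ((2 * q - 2 * l).factorial : ℝ) := by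
    have : 2 * q - 2 * l = 2 * (q - l) := by omega
    rw [this]
    exact_mod_cast two_pow_fact_le (q - l)
  have h2q : (2:ℝ) ^ q = 2 ^ l * 2 ^ (q - l) := by
    rw [← pow_add]; congr 1; omega
  calc ((2*q).factorial : ℝ) * ((2*l).factorial : ℝ) * ((2:ℝ)^q * (q.factorial:ℝ) * ((l.factorial : ℝ) * ((q-l).factorial : ℝ)))
      = (((2*q).factorial : ℝ) * ((2*l).factorial : ℝ) * (q.factorial:ℝ) * (l.factorial : ℝ) * 2^l) * (2 ^ (q-l) * ((q-l).factorial : ℝ)) := by rw [h2q]; ring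
    _ ≤ (((2*q).factorial : ℝ) * ((2*l).factorial : ℝ) * (q.factorial:ℝ) * (l.factorial : ℝ) * 2^l) * ((2 * q - 2 * l).factorial : ℝ) := by
        apply mul_le_mul_of_nonneg_left key (by positivity)
    _ = ((2*q).factorial : ℝ) * (q.factorial:ℝ) * (((2*l).factorial : ℝ) * ((2*q - 2*l).factorial : ℝ) * ((2:ℝ)^l * (l.factorial : ℝ))) := by ring

lemma add_pow_even (a b : ℝ) (q : ℕ) :
    (a + b) ^ (2 * q) + (a - b) ^ (2 * q)
      = 2 * ∑ l ∈ range (q + 1), a ^ (2 * l) * b ^ (2 * q - 2 * l) * ((2 * q).choose (2 * l) : ℝ) := by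
  rw [add_pow, sub_pow, ← sum_add_distrib]
  have key : ∀ m ∈ range (2 * q + 1),
      (a ^ m * b ^ (2*q - m) * ((2*q).choose m : ℝ)
        + (-1 : ℝ) ^ (m + 2*q) * a ^ m * b ^ (2*q - m) * ((2*q).choose m : ℝ))
      = if Even m then 2 * (a ^ m * b ^ (2*q - m) * ((2*q).choose m : ℝ)) else 0 := by
    intro m _
    rcases Nat.even_or_odd m with he | ho
    · rw [if_pos he]
      have : (-1 : ℝ) ^ (m + 2*q) = 1 := Even.neg_one_pow (he.add (even_two_mul q))
      rw [this]; ring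
    · rw [if_neg (by simpa using ho)]
      have : (-1 : ℝ) ^ (m + 2*q) = -1 := Odd.neg_one_pow (Odd.add_even ho (even_two_mul q))
      rw [this]; ring
  rw [sum_congr rfl key, sum_ite, sum_const_zero, add_zero, mul_sum]
  apply sum_nbij' (fun m => m / 2) (fun l => 2 * l)
  · intro m hm; simp only [mem_filter, mem_range] at hm; simp only [mem_range]; omega
  · intro l hl; simp only [mem_range] at hl; simp only [mem_filter, mem_range]
    exact ⟨by omega, even_two_mul l⟩
  · intro m hm; simp only [mem_filter, mem_range] at hm
    obtain ⟨-, t, ht⟩ := hm; omega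
  · intro l hl; omega
  · intro m hm; simp only [mem_filter, mem_range] at hm
    obtain ⟨-, t, ht⟩ := hm
    have : 2 * (m / 2) = m := by omega
    rw [this]

/-- the set of coordinates appearing with odd multiplicity in the tuple `k` -/
def oddSet {n p : ℕ} (k : Fin p → Fin n) : Finset (Fin n) :=
  univ.filter fun i => ¬ Even ((univ.filter fun j => k j = i).card)

lemma char_eq {n p : ℕ} (k : Fin p → Fin n) (x : Fin n → Bool) :
    ∏ j, pm (x (k j)) = ∏ i ∈ oddSet k, pm (x i) := by
  rw [← Fintype.prod_fiberwise' k (fun i => pm (x i))]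
  have h1 : ∀ i : Fin n, (∏ _j : {j // k j = i}, pm (x i))
      = pm (x i) ^ ((univ.filter fun j => k j = i).card) := by
    intro i
    rw [prod_const]
    congr 1
    rw [card_univ, Fintype.card_subtype]
  rw [Fintype.prod_congr _ _ h1]
  simp_rw [pm_pow]
  rw [oddSet, prod_filter]
  apply prod_congr rfl
  intro i _
  by_cases h : Even ((univ.filter fun j => k j = i).card) <;> simp [h]

lemma unif_char {n : ℕ} (S : Finset (Fin n)) (hS : S.Nonempty) :
    ∑ x : Fin n → Bool, ∏ i ∈ S, pm (x i) = 0 := by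
  have h1 : ∀ x : Fin n → Bool, ∏ i ∈ S, pm (x i) = ∏ i, (if i ∈ S then pm (x i) else 1) := by
    intro x
    rw [← prod_filter, filter_mem_eq_inter, univ_inter]
  simp_rw [h1]
  have := Finset.prod_univ_sum (fun _ : Fin n => (univ : Finset Bool))
    (fun i b => if i ∈ S then pm b else 1)
  rw [Fintype.piFinset_univ] at this
  rw [← this]
  obtain ⟨i0, hi0⟩ := hS
  apply prod_eq_zero (mem_univ i0)
  simp [Fintype.sum_bool, if_pos hi0, pm]

lemma expand (n p : ℕ) (v : Fin n → ℝ) (w : (Fin n → Bool) → ℝ) :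
    ∑ x : Fin n → Bool, w x * (∑ i, v i * pm (x i)) ^ p
      = ∑ k : Fin p → Fin n, (∏ j, v (k j)) * ∑ x : Fin n → Bool, w x * ∏ i ∈ oddSet k, pm (x i) := by
  have hpow : ∀ x : Fin n → Bool, (∑ i, v i * pm (x i)) ^ p
      = ∑ k : Fin p → Fin n, (∏ j, v (k j)) * ∏ i ∈ oddSet k, pm (x i) := by
    intro x
    rw [sum_pow' univ (fun i => v i * pm (x i)) p, Fintype.piFinset_univ]
    apply sum_congr rfl
    intro k _
    rw [prod_mul_distrib, char_eq]
  simp_rw [hpow, mul_sum]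
  rw [sum_comm]
  apply sum_congr rfl
  intro k _
  apply sum_congr rfl
  intro x _
  ring

lemma khintchine : ∀ (n : ℕ) (v : Fin n → ℝ) (q : ℕ),
    ∑ x : Fin n → Bool, (∑ i, v i * pm (x i)) ^ (2 * q)
      ≤ 2 ^ n * D q * (∑ i, v i ^ 2) ^ q := by
  intro n
  induction n with
  | zero =>
    intro v q
    rcases Nat.eq_zero_or_pos q with hq | hq
    · subst hq; norm_num [D]
    · simp only [Finset.univ_eq_empty, Finset.sum_empty]
      rw [zero_pow (by omega), zero_pow (by omega)]
      simp
  | succ n ih =>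
    intro v q
    have hre : ∑ x : Fin (n+1) → Bool, (∑ i, v i * pm (x i)) ^ (2*q)
        = ∑ z : (Fin n → Bool) × Bool,
            ((∑ i, v i.succ * pm (z.1 i)) + v 0 * pm z.2) ^ (2*q) := by
      apply Fintype.sum_equiv ((Fin.consEquiv (fun _ : Fin (n+1) => Bool)).symm.trans (Equiv.prodComm _ _))
      intro x
      simp only [Equiv.trans_apply, Equiv.prodComm_apply, Prod.swap_prod_mk,
        Fin.consEquiv, Equiv.coe_fn_symm_mk, Fin.tail, Fin.sum_univ_succ, Function.comp_apply]
      ring_nf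
    rw [hre, Fintype.sum_prod_type]
    set c := v 0 with hc
    set g := fun y : Fin n → Bool => ∑ i, v (Fin.succ i) * pm (y i) with hg
    set t := ∑ i : Fin n, v (Fin.succ i) ^ 2 with ht
    have htnn : 0 ≤ t := by rw [ht]; positivity
    have hbool : ∀ y : Fin n → Bool, (∑ b : Bool, (g y + c * pm b) ^ (2*q))
        = 2 * ∑ l ∈ range (q+1), (g y)^(2*l) * c^(2*q-2*l) * ((2*q).choose (2*l) : ℝ) := by
      intro y
      rw [Fintype.sum_bool]
      have h1 : g y + c * pm true = g y + c := by simp [pm]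
      have h2 : g y + c * pm false = g y - c := by simp [pm]; ring
      rw [h1, h2, add_pow_even]
    rw [sum_congr rfl (fun y _ => hbool y), ← mul_sum, sum_comm]
    have hinner : ∀ l ∈ range (q+1),
        (∑ y : Fin n → Bool, (g y)^(2*l) * c^(2*q-2*l) * ((2*q).choose (2*l) : ℝ))
        ≤ 2^n * D q * ((q.choose l : ℝ) * t^l * (c^2)^(q-l)) := by
      intro l hl
      rw [mem_range] at hl
      have hlq : l ≤ q := by omega
      have hcpow : c^(2*q-2*l) = (c^2)^(q-l) := by
        rw [← pow_mul]; congr 1; omega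
      have hKnn : (0:ℝ) ≤ (c^2)^(q-l) := by positivity
      calc ∑ y : Fin n → Bool, (g y)^(2*l) * c^(2*q-2*l) * ((2*q).choose (2*l) : ℝ)
          = (∑ y : Fin n → Bool, (g y)^(2*l)) * (c^2)^(q-l) * ((2*q).choose (2*l) : ℝ) := by
            rw [sum_mul, sum_mul]
            exact sum_congr rfl fun y _ => by rw [hcpow]
        _ ≤ (2^n * D l * t^l) * (c^2)^(q-l) * ((2*q).choose (2*l) : ℝ) := by
            apply mul_le_mul_of_nonneg_right _ (by positivity)
            apply mul_le_mul_of_nonneg_right _ hKnn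
            exact ih (fun i => v (Fin.succ i)) l
        _ = (((2*q).choose (2*l) : ℝ) * D l) * (2^n * t^l * (c^2)^(q-l)) := by ring
        _ ≤ (D q * (q.choose l : ℝ)) * (2^n * t^l * (c^2)^(q-l)) := by
            apply mul_le_mul_of_nonneg_right (choose_D_le hlq) (by positivity)
        _ = 2^n * D q * ((q.choose l : ℝ) * t^l * (c^2)^(q-l)) := by ring
    calc 2 * ∑ l ∈ range (q+1), ∑ y : Fin n → Bool, (g y)^(2*l) * c^(2*q-2*l) * ((2*q).choose (2*l) : ℝ)
        ≤ 2 * ∑ l ∈ range (q+1), 2^n * D q * ((q.choose l : ℝ) * t^l * (c^2)^(q-l)) := by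
          apply mul_le_mul_of_nonneg_left (sum_le_sum hinner) (by norm_num)
      _ = 2^(n+1) * D q * ∑ l ∈ range (q+1), t^l * (c^2)^(q-l) * (q.choose l : ℝ) := by
          rw [mul_sum, mul_sum]; exact sum_congr rfl fun l _ => by ring
      _ = 2^(n+1) * D q * (t + c^2)^q := by rw [add_pow]
      _ = 2^(n+1) * D q * (∑ i : Fin (n+1), v i ^ 2)^q := by
          rw [Fin.sum_univ_succ, add_comm (v 0 ^ 2)]

theorem stmt18 (n : ℕ) (v : Fin n → ℝ) (hv : ∑ i, v i ^ 2 = 1)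
    (ε : ℝ) (hε : 0 ≤ ε)
    (μ : (Fin n → Bool) → ℝ) (hμ0 : ∀ x, 0 ≤ μ x) (hμ1 : ∑ x, μ x = 1)
    -- μ is an ε-biased distribution over {±1}ⁿ
    (hbias : ∀ S : Finset (Fin n), S.Nonempty →
      |∑ x, μ x * ∏ i ∈ S, pm (x i)| ≤ ε)
    (p : ℕ) (hp : 2 ≤ p) (hpe : Even p) :
    ∑ x, μ x * (∑ i, v i * pm (x i)) ^ p ≤
      (p.factorial : ℝ) / (2 ^ (p / 2) * ((p / 2).factorial : ℝ))
        + ((univ.filter fun i => v i ≠ 0).card : ℝ) ^ p * ε := by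
  obtain ⟨q, hq⟩ := hpe
  have hpq : p = 2 * q := by omega
  have hq1 : 1 ≤ q := by omega
  have hp2 : p / 2 = q := by omega
  rw [hp2]
  have hDq : (p.factorial : ℝ) / (2 ^ q * (q.factorial : ℝ)) = D q := by
    rw [D, hpq]
  rw [hDq]
  set s : ℕ := (univ.filter fun i => v i ≠ 0).card with hs
  -- part 0 : expansion
  rw [expand n p v μ]
  set c : (Fin p → Fin n) → ℝ := fun k => ∏ j, v (k j) with hcdef
  set E : (Fin p → Fin n) → ℝ := fun k => ∑ x : Fin n → Bool, μ x * ∏ i ∈ oddSet k, pm (x i)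
    with hEdef
  rw [← sum_filter_add_sum_filter_not univ (fun k => oddSet k = ∅) (fun k => c k * E k)]
  -- Part 1 : the even-multiplicity tuples
  have part1 : ∑ k ∈ univ.filter (fun k : Fin p → Fin n => oddSet k = ∅), c k * E k ≤ D q := by
    have hE1 : ∀ k ∈ univ.filter (fun k : Fin p → Fin n => oddSet k = ∅), c k * E k = c k := by
      intro k hk
      rw [mem_filter] at hk
      have : E k = 1 := by
        rw [hEdef]
        simp only [hk.2, prod_empty, mul_one]
        exact hμ1
      rw [this, mul_one]
    rw [sum_congr rfl hE1]
    -- uniform expansion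
    have huni := expand n p v (fun _ => (1:ℝ))
    simp only [one_mul] at huni
    have huni2 : ∑ x : Fin n → Bool, (∑ i, v i * pm (x i)) ^ p
        = ∑ k ∈ univ.filter (fun k : Fin p → Fin n => oddSet k = ∅), c k * 2^n := by
      rw [huni, ← sum_filter_add_sum_filter_not univ (fun k => oddSet k = ∅)]
      have hz : ∑ k ∈ univ.filter (fun k : Fin p → Fin n => ¬ oddSet k = ∅),
          (∏ j, v (k j)) * ∑ x : Fin n → Bool, ∏ i ∈ oddSet k, pm (x i) = 0 := by
        apply sum_eq_zero
        intro k hk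
        rw [mem_filter] at hk
        rw [unif_char _ (nonempty_iff_ne_empty.mpr hk.2), mul_zero]
      rw [hz, add_zero]
      apply sum_congr rfl
      intro k hk
      rw [mem_filter] at hk
      simp only [hk.2, prod_empty]
      have : ∑ _x : Fin n → Bool, (1:ℝ) = 2^n := by
        rw [sum_const, card_univ]
        simp [mul_comm]
      rw [this]
    have hkh := khintchine n v q
    rw [hv, one_pow, mul_one, ← hpq] at hkh
    rw [huni2, ← sum_mul] at hkh
    have h2n : (0:ℝ) < 2^n := by positivity
    calc ∑ k ∈ univ.filter (fun k : Fin p → Fin n => oddSet k = ∅), c k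
        = (∑ k ∈ univ.filter (fun k : Fin p → Fin n => oddSet k = ∅), c k) * 2^n / 2^n := by
          field_simp
      _ ≤ 2^n * D q / 2^n := by
          gcongr
      _ = D q := by field_simp
  -- Part 2 : the odd tuples
  have part2 : ∑ k ∈ univ.filter (fun k : Fin p → Fin n => ¬ oddSet k = ∅), c k * E k
      ≤ (s:ℝ)^p * ε := by
    have hterm : ∀ k ∈ univ.filter (fun k : Fin p → Fin n => ¬ oddSet k = ∅),
        c k * E k ≤ |c k| * ε := by
      intro k hk
      rw [mem_filter] at hk
      calc c k * E k ≤ |c k * E k| := le_abs_self _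
        _ = |c k| * |E k| := abs_mul _ _
        _ ≤ |c k| * ε := by
            apply mul_le_mul_of_nonneg_left _ (abs_nonneg _)
            exact hbias (oddSet k) (nonempty_iff_ne_empty.mpr hk.2)
    calc ∑ k ∈ univ.filter (fun k : Fin p → Fin n => ¬ oddSet k = ∅), c k * E k
        ≤ ∑ k ∈ univ.filter (fun k : Fin p → Fin n => ¬ oddSet k = ∅), |c k| * ε :=
          sum_le_sum hterm
      _ ≤ ∑ k : Fin p → Fin n, |c k| * ε := by
          apply sum_le_sum_of_subset_of_nonneg (filter_subset _ _)
          intro k _ _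
          positivity
      _ = (∑ k : Fin p → Fin n, ∏ j, |v (k j)|) * ε := by
          rw [sum_mul]
          exact sum_congr rfl fun k _ => by rw [hcdef, abs_prod]
      _ ≤ (s:ℝ)^p * ε := by
          apply mul_le_mul_of_nonneg_right _ hε
          have habs : ∑ k : Fin p → Fin n, ∏ j, |v (k j)| = (∑ i, |v i|)^p := by
            rw [sum_pow' univ (fun i => |v i|) p, Fintype.piFinset_univ]
          rw [habs]
          -- now : (∑ |v i|)^p ≤ s^p
          have hsum0 : ∑ i ∈ univ.filter (fun i => v i ≠ 0), |v i| = ∑ i, |v i| := by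
            apply sum_filter_of_ne
            intro i _ h
            exact fun h0 => h (by rw [h0, abs_zero])
          have hsq0 : ∑ i ∈ univ.filter (fun i => v i ≠ 0), v i ^ 2 = 1 := by
            rw [← hv]
            apply sum_filter_of_ne
            intro i _ h
            exact fun h0 => h (by rw [h0]; ring)
          have hCS : (∑ i, |v i|)^2 ≤ (s:ℝ) := by
            rw [← hsum0]
            calc (∑ i ∈ univ.filter (fun i => v i ≠ 0), |v i|)^2
                ≤ (s:ℝ) * ∑ i ∈ univ.filter (fun i => v i ≠ 0), |v i| ^ 2 :=
                  sq_sum_le_card_mul_sum_sq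
              _ = (s:ℝ) := by
                  have : ∀ i ∈ univ.filter (fun i => v i ≠ 0), |v i|^2 = v i ^2 := by
                    intro i _; rw [sq_abs]
                  rw [sum_congr rfl this, hsq0, mul_one]
          have hs1 : (1:ℝ) ≤ (s:ℝ) := by
            have : 0 < s := by
              rw [hs, card_pos, filter_nonempty_iff]
              by_contra hcon
              push_neg at hcon
              have : ∑ i, v i ^ 2 = 0 := by
                apply sum_eq_zero
                intro i _
                rw [hcon i (mem_univ i)]
                ring
              rw [this] at hv
              norm_num at hv
            exact_mod_cast this
          calc (∑ i, |v i|)^p = ((∑ i, |v i|)^2)^q := by rw [← pow_mul, ← hpq]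
            _ ≤ (s:ℝ)^q := by
                apply pow_le_pow_left₀ (by positivity) hCS
            _ ≤ (s:ℝ)^p := pow_le_pow_right₀ hs1 (by omega)
  linarith [part1, part2]
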